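/- For the second generating function of Racah polynomials: Σ_{k=0}^n [(-n)_k (λ2)_k / ((-λ3-n+1)_k k!)] R_{p,k} t^k = ₂F₁(-p, λ1+n-p; λ1+λ2+λ3+n-1; t) · ₂F₁(p-n, p+λ2; -λ3-n+1; t), for 0 ≤ p ≤ n and generic parameters λ1, λ2, λ3. -/

import Mathlib

open Finset

/-- Rising Pochhammer symbol `(x)_m`. -/
noncomputable def poch (x : ℂ) (m : ℕ) : ℂ := (ascPochhammer ℂ m).eval x

/-- Racah polynomial value
`R_{p,k} = ₄F₃(-p, p+λ2+λ3-1, -k, k+λ1+λ2-1; λ2, λ1+λ2+λ3+n-1, -n; 1)`,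
a terminating sum. -/
noncomputable def Racah (l1 l2 l3 : ℂ) (n p k : ℕ) : ℂ :=
  ∑ j ∈ Finset.range (min p k + 1),
    poch (-(p : ℂ)) j * poch ((p : ℂ) + l2 + l3 - 1) j * poch (-(k : ℂ)) j *
        poch ((k : ℂ) + l1 + l2 - 1) j /
      (poch l2 j * poch (l1 + l2 + l3 + (n : ℂ) - 1) j * poch (-(n : ℂ)) j *
        (j.factorial : ℂ))

/-- Terminating Gauss hypergeometric polynomial `₂F₁(-m, b; c; t)`. -/
noncomputable def F21 (m : ℕ) (b c t : ℂ) : ℂ :=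
  ∑ j ∈ Finset.range (m + 1),
    poch (-(m : ℂ)) j * poch b j / (poch c j * (j.factorial : ℂ)) * t ^ j

lemma poch_zero (x : ℂ) : poch x 0 = 1 := by simp [poch]

lemma poch_succ (x : ℂ) (m : ℕ) : poch x (m+1) = poch x m * (x + m) := by
  simp [poch, ascPochhammer_succ_eval]

lemma poch_prod (x : ℂ) (m : ℕ) : poch x m = ∏ i ∈ range m, (x + i) := by
  induction m with
  | zero => simp [poch_zero]
  | succ m ih => rw [poch_succ, ih, Finset.prod_range_succ]

lemma poch_add (x : ℂ) (a b : ℕ) : poch x (a+b) = poch x a * poch (x+a) b := by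
  induction b with
  | zero => simp [poch_zero]
  | succ b ih => rw [← Nat.add_assoc, poch_succ, ih, poch_succ]; push_cast; ring

lemma poch_reflect (x : ℂ) (m : ℕ) : poch x m = (-1)^m * poch (1 - x - m) m := by
  rw [poch_prod, poch_prod, ← Finset.prod_range_reflect]
  have : ((-1:ℂ))^m = ∏ _i ∈ range m, (-1:ℂ) := by simp
  rw [this, ← Finset.prod_mul_distrib]
  apply Finset.prod_congr rfl
  intro i hi
  simp only [Finset.mem_range] at hi
  have : ((m - 1 - i : ℕ) : ℂ) = (m : ℂ) - 1 - i := by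
    have h1 : i ≤ m - 1 := by omega
    have h2 : (1:ℕ) ≤ m := by omega
    push_cast [Nat.cast_sub h1, Nat.cast_sub h2]
    ring
  rw [this]; ring

lemma poch_ne_zero {x : ℂ} {m : ℕ} (h : ∀ i < m, x + i ≠ 0) : poch x m ≠ 0 := by
  rw [poch_prod]
  exact Finset.prod_ne_zero_iff.2 fun i hi => h i (Finset.mem_range.1 hi)

lemma poch_neg_nat_zero {k j : ℕ} (h : k < j) : poch (-(k:ℂ)) j = 0 := by
  rw [poch_prod]
  apply Finset.prod_eq_zero (Finset.mem_range.2 h)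
  simp

lemma poch_neg_nat {k j : ℕ} (h : j ≤ k) :
    poch (-(k:ℂ)) j = (-1)^j * (k.choose j) * (j.factorial) := by
  induction j with
  | zero => simp [poch_zero]
  | succ j ih =>
    have hj : j ≤ k := by omega
    rw [poch_succ, ih hj]
    have hc : ((k.choose (j+1)) : ℂ) * (j+1) = (k.choose j) * ((k:ℂ) - j) := by
      have := Nat.add_one_mul_choose_eq k j
      have h2 : (k.choose (j+1)) * (j+1) = (k.choose j) * (k - j) := by
        rw [Nat.choose_succ_right_eq]
      have := congrArg (fun z : ℕ => (z : ℂ)) h2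
      push_cast [Nat.cast_sub hj] at this
      push_cast
      linear_combination this
    push_cast
    calc (-1:ℂ)^j * (k.choose j) * (j.factorial) * (-(k:ℂ) + j)
        = (-1)^(j+1) * ((k.choose j) * ((k:ℂ) - j)) * (j.factorial) := by ring
      _ = (-1)^(j+1) * ((k.choose (j+1)) * ((j:ℂ)+1)) * (j.factorial) := by rw [← hc]
      _ = (-1)^(j+1) * (k.choose (j+1)) * ((j.factorial) * (j+1)) := by ring
    rw [Nat.factorial_succ]
    push_cast
    ring


lemma sum_tri (m : ℕ) (f : ℕ → ℕ → ℂ) :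
    ∑ j ∈ range (m+1), ∑ i ∈ range (j+1), f j i
      = ∑ i ∈ range (m+1), ∑ r ∈ range (m-i+1), f (i+r) i := by
  rw [Finset.sum_sigma', Finset.sum_sigma']
  refine Finset.sum_nbij' (fun q : Σ _j : ℕ, ℕ => (⟨q.2, q.1 - q.2⟩ : Σ _i : ℕ, ℕ))
    (fun q : Σ _i : ℕ, ℕ => (⟨q.1 + q.2, q.1⟩ : Σ _j : ℕ, ℕ)) ?_ ?_ ?_ ?_ ?_
  · rintro ⟨a, b⟩ hab
    simp only [Finset.mem_sigma, Finset.mem_range] at hab ⊢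
    omega
  · rintro ⟨a, b⟩ hab
    simp only [Finset.mem_sigma, Finset.mem_range] at hab ⊢
    omega
  · rintro ⟨a, b⟩ hab
    simp only [Finset.mem_sigma, Finset.mem_range] at hab
    dsimp only
    rw [show b + (a - b) = a by omega]
  · rintro ⟨a, b⟩ hab
    simp only [Finset.mem_sigma, Finset.mem_range] at hab
    dsimp only
    rw [show a + b - a = b by omega]
  · rintro ⟨a, b⟩ hab
    simp only [Finset.mem_sigma, Finset.mem_range] at hab
    dsimp only
    rw [show b + (a - b) = a by omega]

lemma vandermonde (x y : ℂ) (m : ℕ) :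
    poch (x+y) m = ∑ j ∈ range (m+1), (m.choose j : ℂ) * poch x j * poch y (m-j) := by
  induction m with
  | zero => simp [poch_zero]
  | succ m ih =>
    rw [poch_succ, ih, Finset.sum_mul]
    have key : ∀ j ∈ range (m+1), (m.choose j:ℂ) * poch x j * poch y (m-j) * (x+y+m)
        = (m.choose j:ℂ) * (poch x (j+1) * poch y (m-j))
          + (m.choose j:ℂ) * (poch x j * poch y ((m-j)+1)) := by
      intro j hj
      simp only [Finset.mem_range] at hj
      have hjm : j ≤ m := by omega
      have hc : (x+y+(m:ℂ)) = (x+(j:ℂ)) + (y+((m-j:ℕ):ℂ)) := by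
        push_cast [Nat.cast_sub hjm]; ring
      rw [hc, poch_succ, poch_succ]; ring
    rw [Finset.sum_congr rfl key, Finset.sum_add_distrib]
    have e2 : ∑ j ∈ range (m+1), (m.choose j:ℂ) * (poch x j * poch y ((m-j)+1))
        = ∑ j ∈ range (m+1), (m.choose j:ℂ) * (poch x j * poch y (m+1-j)) := by
      apply Finset.sum_congr rfl
      intro j hj
      simp only [Finset.mem_range] at hj
      have : (m-j)+1 = m+1-j := by omega
      rw [this]
    rw [e2]
    rw [Finset.sum_range_succ' (fun j => ((m+1).choose j : ℂ) * poch x j * poch y (m+1-j)) (m+1)]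
    simp only [Nat.succ_sub_succ, Nat.choose_zero_right, Nat.cast_one, one_mul, poch_zero,
      Nat.sub_zero]
    have e3 : ∀ j ∈ range (m+1), ((m+1).choose (j+1) : ℂ) * poch x (j+1) * poch y (m-j)
        = (m.choose j : ℂ) * (poch x (j+1) * poch y (m-j))
          + (m.choose (j+1) : ℂ) * (poch x (j+1) * poch y (m-j)) := by
      intro j hj
      rw [Nat.choose_succ_succ]
      push_cast; ring
    rw [Finset.sum_congr rfl e3, Finset.sum_add_distrib]
    have e4 : ∑ j ∈ range (m+1), (m.choose (j+1) : ℂ) * (poch x (j+1) * poch y (m-j))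
          + poch y (m+1)
        = ∑ j ∈ range (m+1), (m.choose j:ℂ) * (poch x j * poch y (m+1-j)) := by
      have := Finset.sum_range_succ' (fun j => (m.choose j : ℂ) * (poch x j * poch y (m+1-j))) (m+1)
      simp only [Nat.succ_sub_succ, Nat.choose_zero_right, Nat.cast_one, poch_zero,
        Nat.sub_zero, one_mul] at this
      rw [← this, Finset.sum_range_succ]
      simp [Nat.choose_succ_self]
    rw [add_assoc, e4]


lemma sum_tri' (M : ℕ) (f : ℕ → ℕ → ℂ) :
    ∑ j ∈ range (M+1), ∑ i ∈ range (M-j+1), f j i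
      = ∑ s ∈ range (M+1), ∑ j ∈ range (s+1), f j (s-j) := by
  rw [sum_tri M (fun s j => f j (s-j))]
  apply Finset.sum_congr rfl
  intro j _
  apply Finset.sum_congr rfl
  intro r _
  simp

lemma PS1 (a b c : ℂ) (M : ℕ) :
    ∑ i ∈ range (M+1), (M.choose i:ℂ) * poch a i * poch b i * poch (c+i) (M-i)
        * poch (c-a-b) (M-i)
      = poch (c-a) M * poch (c-b) M := by
  have step1 : ∀ j ∈ range (M+1),
      (M.choose j:ℂ) * poch a j * poch b j * poch (c+j) (M-j) * poch (c-a-b) (M-j)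
      = ∑ i ∈ range (M-j+1), ((M.choose j:ℂ) * ((M-j).choose i : ℂ))
          * poch a (j+i) * poch b j * poch (c-a) (M-j-i) * poch (c-a-b) (M-j) := by
    intro j hj
    have hc : c + (j:ℂ) = (a+(j:ℂ)) + (c-a) := by ring
    rw [hc, vandermonde, Finset.mul_sum, Finset.sum_mul]
    apply Finset.sum_congr rfl
    intro i _
    rw [poch_add a j i]
    ring
  rw [Finset.sum_congr rfl step1, sum_tri']
  have step2 : ∀ s ∈ range (M+1),
      ∑ j ∈ range (s+1), ((M.choose j:ℂ) * ((M-j).choose (s-j) : ℂ))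
          * poch a (j+(s-j)) * poch b j * poch (c-a) (M-j-(s-j)) * poch (c-a-b) (M-j)
      = (M.choose s : ℂ) * poch a s * poch (c-a) (M-s) * poch (c-a-b) (M-s)
          * poch (c-a+((M-s:ℕ):ℂ)) s := by
    intro s hs
    simp only [Finset.mem_range] at hs
    have hsM : s ≤ M := by omega
    have e1 : ∀ j ∈ range (s+1), ((M.choose j:ℂ) * ((M-j).choose (s-j) : ℂ))
          * poch a (j+(s-j)) * poch b j * poch (c-a) (M-j-(s-j)) * poch (c-a-b) (M-j)
        = ((M.choose s:ℂ) * poch a s * poch (c-a) (M-s) * poch (c-a-b) (M-s))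
          * ((s.choose j : ℂ) * poch b j * poch (c-a-b+((M-s:ℕ):ℂ)) (s-j)) := by
      intro j hj
      simp only [Finset.mem_range] at hj
      have hjs : j ≤ s := by omega
      have h1 : j + (s-j) = s := by omega
      have h2 : M - j - (s-j) = M - s := by omega
      have h3 : M - j = (M-s) + (s-j) := by omega
      have h4 : ((M.choose j) : ℂ) * (((M-j).choose (s-j)) : ℂ)
          = ((M.choose s) : ℂ) * ((s.choose j) : ℂ) := by
        exact_mod_cast congrArg (fun z : ℕ => (z : ℂ)) (Nat.choose_mul (n := M) hjs).symm
      have hsplit : poch (c-a-b) (M-j)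
          = poch (c-a-b) (M-s) * poch (c-a-b+((M-s:ℕ):ℂ)) (s-j) := by
        rw [h3, poch_add]
      rw [h1, h2, hsplit]
      linear_combination (poch a s * poch b j * poch (c-a) (M-s)
        * (poch (c-a-b) (M-s) * poch (c-a-b+((M-s:ℕ):ℂ)) (s-j))) * h4
    rw [Finset.sum_congr rfl e1, ← Finset.mul_sum]
    congr 1
    have := vandermonde b (c-a-b+((M-s:ℕ):ℂ)) s
    have harg : b + (c-a-b+((M-s:ℕ):ℂ)) = c-a+((M-s:ℕ):ℂ) := by ring
    rw [harg] at this
    rw [← this]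
  rw [Finset.sum_congr rfl step2]
  have step3 : ∀ s ∈ range (M+1),
      (M.choose s : ℂ) * poch a s * poch (c-a) (M-s) * poch (c-a-b) (M-s)
          * poch (c-a+((M-s:ℕ):ℂ)) s
      = poch (c-a) M * ((M.choose s : ℂ) * poch a s * poch (c-a-b) (M-s)) := by
    intro s hs
    simp only [Finset.mem_range] at hs
    have h1 : M = (M-s) + s := by omega
    have h2 : poch (c-a) M = poch (c-a) (M-s) * poch (c-a+((M-s:ℕ):ℂ)) s := by
      conv_lhs => rw [h1, poch_add]
    rw [h2]; ring
  rw [Finset.sum_congr rfl step3, ← Finset.mul_sum]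
  congr 1
  have := vandermonde a (c-a-b) M
  have harg : a + (c-a-b) = c-b := by ring
  rw [harg] at this
  rw [← this]


lemma poch_reflect' (x : ℂ) (m : ℕ) : poch (1 - x - m) m = (-1)^m * poch x m := by
  rw [poch_reflect (1-x-m) m, show (1 - (1-x-(m:ℂ)) - m) = x by ring]

lemma neg_one_sq_pow (n : ℕ) : ((-1:ℂ))^n * (-1)^n = 1 := by
  rw [← mul_pow]; norm_num

lemma PS2 (A B U V : ℂ) (M : ℕ) (h : U + V = A + B - M + 1) :
    ∑ r ∈ range (M+1), (-1)^r * (M.choose r:ℂ) * poch A r * poch B r * poch (U+r) (M-r)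
        * poch (V+r) (M-r)
      = (-1)^M * poch (U-A) M * poch (U-B) M := by
  have ps := PS1 (1-U-M) (1-V-M) (1-B-M) M
  have refl := Finset.sum_range_reflect (fun i => ((M.choose i:ℂ) * poch (1-U-(M:ℂ)) i
      * poch (1-V-(M:ℂ)) i * poch ((1-B-(M:ℂ))+i) (M-i)
      * poch ((1-B-(M:ℂ))-(1-U-(M:ℂ))-(1-V-(M:ℂ))) (M-i))) (M+1)
  simp only [Nat.add_sub_cancel] at refl
  rw [← refl] at ps
  have term : ∀ r ∈ range (M+1),
      ((M.choose (M-r):ℂ) * poch (1-U-(M:ℂ)) (M-r) * poch (1-V-(M:ℂ)) (M-r)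
        * poch ((1-B-(M:ℂ))+((M-r:ℕ):ℂ)) (M-(M-r))
        * poch ((1-B-(M:ℂ))-(1-U-(M:ℂ))-(1-V-(M:ℂ))) (M-(M-r)))
      = (-1)^r * (M.choose r:ℂ) * poch A r * poch B r * poch (U+r) (M-r) * poch (V+r) (M-r) := by
    intro r hr
    simp only [Finset.mem_range] at hr
    have hrM : r ≤ M := by omega
    have e0 : M - (M-r) = r := by omega
    have e1 : (M.choose (M-r)) = (M.choose r) := Nat.choose_symm hrM
    have e2 : poch (1-U-(M:ℂ)) (M-r) = (-1)^(M-r) * poch (U+r) (M-r) := by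
      have := poch_reflect' (U+(r:ℂ)) (M-r)
      rw [show (1 - (U+(r:ℂ)) - ((M-r:ℕ):ℂ)) = 1-U-(M:ℂ) by
        push_cast [Nat.cast_sub hrM]; ring] at this
      exact this
    have e3 : poch (1-V-(M:ℂ)) (M-r) = (-1)^(M-r) * poch (V+r) (M-r) := by
      have := poch_reflect' (V+(r:ℂ)) (M-r)
      rw [show (1 - (V+(r:ℂ)) - ((M-r:ℕ):ℂ)) = 1-V-(M:ℂ) by
        push_cast [Nat.cast_sub hrM]; ring] at this
      exact this
    have e4 : poch ((1-B-(M:ℂ))+((M-r:ℕ):ℂ)) r = (-1)^r * poch B r := by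
      have := poch_reflect' B r
      rw [show (1 - B - (r:ℂ)) = (1-B-(M:ℂ))+((M-r:ℕ):ℂ) by
        push_cast [Nat.cast_sub hrM]; ring] at this
      exact this
    have e5 : ((1-B-(M:ℂ))-(1-U-(M:ℂ))-(1-V-(M:ℂ))) = A := by linear_combination h
    rw [e0, e1, e2, e3, e4, e5]
    calc ((M.choose r):ℂ) * ((-1)^(M-r) * poch (U+r) (M-r)) * ((-1)^(M-r) * poch (V+r) (M-r))
          * ((-1)^r * poch B r) * poch A r
        = ((-1)^(M-r) * (-1)^(M-r)) * ((-1)^r * (M.choose r:ℂ) * poch A r * poch B r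
            * poch (U+r) (M-r) * poch (V+r) (M-r)) := by ring
      _ = _ := by rw [neg_one_sq_pow]; ring
  rw [Finset.sum_congr rfl term] at ps
  rw [ps]
  have e6 : poch ((1-B-(M:ℂ))-(1-U-(M:ℂ))) M = poch (U-B) M := by
    rw [show ((1-B-(M:ℂ))-(1-U-(M:ℂ))) = U-B by ring]
  have e7 : poch ((1-B-(M:ℂ))-(1-V-(M:ℂ))) M = (-1)^M * poch (U-A) M := by
    rw [show ((1-B-(M:ℂ))-(1-V-(M:ℂ))) = V-B by ring,
      show (V-B) = 1-(U-A)-(M:ℂ) by linear_combination h]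
    exact poch_reflect' (U-A) M
  rw [e6, e7]; ring


lemma whipple (m : ℕ) (x y u v w : ℂ) :
    ∑ j ∈ range (m+1), (-1)^j * (m.choose j : ℂ) * poch x j * poch y j
        * poch (u+v+w-x-y+(m:ℂ)-1) j * poch (u+j) (m-j) * poch (v+j) (m-j) * poch (w+j) (m-j)
      = ∑ j ∈ range (m+1), (m.choose j :ℂ) * poch x j * poch (w-y) j * poch (v-x) (m-j)
        * poch (u-x) (m-j) * poch (w+j) (m-j) * poch (u+v-x-y+(m:ℂ)-j) j := by
  have stepA : ∀ j ∈ range (m+1),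
      (-1)^j * (m.choose j : ℂ) * poch x j * poch y j
        * poch (u+v+w-x-y+(m:ℂ)-1) j * poch (u+j) (m-j) * poch (v+j) (m-j) * poch (w+j) (m-j)
      = ∑ i ∈ range (j+1), (-1)^j * (m.choose j : ℂ) * ((j.choose i):ℂ) * poch x j
          * poch (w-y) i * poch (x+y-u-v-(m:ℂ)+1) i * poch (w+i) (m-i)
          * poch (u+v-x+(m:ℂ)-1) (j-i) * poch (u+j) (m-j) * poch (v+j) (m-j) := by
    intro j hj
    simp only [Finset.mem_range] at hj
    have hjm : j ≤ m := by omega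
    have ps := PS1 (w-y) (x+y-u-v-(m:ℂ)+1) w j
    rw [show w-(w-y)-(x+y-u-v-(m:ℂ)+1) = u+v-x+(m:ℂ)-1 by ring,
      show w-(w-y) = y by ring,
      show w-(x+y-u-v-(m:ℂ)+1) = u+v+w-x-y+(m:ℂ)-1 by ring] at ps
    calc (-1)^j * (m.choose j : ℂ) * poch x j * poch y j
          * poch (u+v+w-x-y+(m:ℂ)-1) j * poch (u+j) (m-j) * poch (v+j) (m-j)
          * poch (w+j) (m-j)
        = ((-1)^j * (m.choose j : ℂ) * poch x j * poch (u+(j:ℂ)) (m-j)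
            * poch (v+(j:ℂ)) (m-j) * poch (w+(j:ℂ)) (m-j))
          * (poch y j * poch (u+v+w-x-y+(m:ℂ)-1) j) := by ring
      _ = _ := by
          rw [← ps, Finset.mul_sum]
          apply Finset.sum_congr rfl
          intro i hi
          simp only [Finset.mem_range] at hi
          have hij : i ≤ j := by omega
          have merge : poch (w+(i:ℂ)) (m-i) = poch (w+(i:ℂ)) (j-i) * poch (w+(j:ℂ)) (m-j) := by
            have h1 : m - i = (j-i) + (m-j) := by omega
            rw [h1, poch_add]
            congr 2
            push_cast [Nat.cast_sub hij]
            ring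
          rw [merge]
          ring
  rw [Finset.sum_congr rfl stepA, sum_tri]
  apply Finset.sum_congr rfl
  intro i hi
  simp only [Finset.mem_range] at hi
  have him : i ≤ m := by omega
  have stepC : ∀ r ∈ range (m-i+1),
      (-1)^(i+r) * (m.choose (i+r) : ℂ) * (((i+r).choose i):ℂ) * poch x (i+r)
          * poch (w-y) i * poch (x+y-u-v-(m:ℂ)+1) i * poch (w+i) (m-i)
          * poch (u+v-x+(m:ℂ)-1) ((i+r)-i) * poch (u+((i+r:ℕ):ℂ)) (m-(i+r))
          * poch (v+((i+r:ℕ):ℂ)) (m-(i+r))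
      = ((-1)^i * (m.choose i : ℂ) * poch x i * poch (w-y) i * poch (x+y-u-v-(m:ℂ)+1) i
          * poch (w+i) (m-i))
        * ((-1)^r * (((m-i).choose r):ℂ) * poch (x+(i:ℂ)) r * poch (u+v-x+(m:ℂ)-1) r
          * poch ((u+(i:ℂ))+r) ((m-i)-r) * poch ((v+(i:ℂ))+r) ((m-i)-r)) := by
    intro r hr
    simp only [Finset.mem_range] at hr
    have hrm : i + r ≤ m := by omega
    have e0 : (i+r) - i = r := by omega
    have e1 : m - (i+r) = (m-i) - r := by omega
    have e2 : ((m.choose (i+r)) : ℂ) * (((i+r).choose i) : ℂ)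
        = ((m.choose i):ℂ) * (((m-i).choose r):ℂ) := by
      have h5 := Nat.choose_mul (n := m) (Nat.le_add_right i r)
      rw [e0] at h5
      exact_mod_cast congrArg (fun z : ℕ => (z : ℂ)) h5
    have e3 : poch x (i+r) = poch x i * poch (x+(i:ℂ)) r := poch_add x i r
    have e4 : poch (u+((i+r:ℕ):ℂ)) ((m-i)-r) = poch ((u+(i:ℂ))+(r:ℂ)) ((m-i)-r) := by
      congr 1; push_cast; ring
    have e5 : poch (v+((i+r:ℕ):ℂ)) ((m-i)-r) = poch ((v+(i:ℂ))+(r:ℂ)) ((m-i)-r) := by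
      congr 1; push_cast; ring
    rw [e0, e1, e3, e4, e5, pow_add]
    linear_combination ((-1:ℂ)^i * (-1)^r * poch x i * poch (x+(i:ℂ)) r
      * poch (w-y) i * poch (x+y-u-v-(m:ℂ)+1) i * poch (w+(i:ℂ)) (m-i)
      * poch (u+v-x+(m:ℂ)-1) r * poch ((u+(i:ℂ))+(r:ℂ)) ((m-i)-r)
      * poch ((v+(i:ℂ))+(r:ℂ)) ((m-i)-r)) * e2
  rw [Finset.sum_congr rfl stepC, ← Finset.mul_sum]
  have cond : (u+(i:ℂ)) + (v+(i:ℂ)) = (x+(i:ℂ)) + (u+v-x+(m:ℂ)-1) - ((m-i:ℕ):ℂ) + 1 := by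
    push_cast [Nat.cast_sub him]; ring
  rw [PS2 (x+(i:ℂ)) (u+v-x+(m:ℂ)-1) (u+(i:ℂ)) (v+(i:ℂ)) (m-i) cond]
  have f1 : poch ((u+(i:ℂ)) - (x+(i:ℂ))) (m-i) = poch (u-x) (m-i) := by
    congr 1; ring
  have f2 : poch ((u+(i:ℂ)) - (u+v-x+(m:ℂ)-1)) (m-i) = (-1)^(m-i) * poch (v-x) (m-i) := by
    have h6 := poch_reflect' (v-x) (m-i)
    rw [show (1 - (v-x) - ((m-i:ℕ):ℂ)) = (u+(i:ℂ)) - (u+v-x+(m:ℂ)-1) by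
      push_cast [Nat.cast_sub him]; ring] at h6
    exact h6
  have f3 : poch (u+v-x-y+(m:ℂ)-(i:ℂ)) i = (-1)^i * poch (x+y-u-v-(m:ℂ)+1) i := by
    have h7 := poch_reflect' (x+y-u-v-(m:ℂ)+1) i
    rw [show (1 - (x+y-u-v-(m:ℂ)+1) - (i:ℂ)) = u+v-x-y+(m:ℂ)-(i:ℂ) by ring] at h7
    exact h7
  rw [f1, f2, f3]
  linear_combination ((m.choose i : ℂ) * poch x i * poch (w-y) i * poch (v-x) (m-i)
    * poch (u-x) (m-i) * poch (w+(i:ℂ)) (m-i) * (-1:ℂ)^i * poch (x+y-u-v-(m:ℂ)+1) i)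
    * (neg_one_sq_pow (m-i))


section main
variable (l1 l2 l3 : ℝ) (n p : ℕ)

lemma hl2_ne (h2 : 0 < l2) (j : ℕ) : poch (l2:ℂ) j ≠ 0 := by
  apply poch_ne_zero
  intro i _
  have : ((l2:ℂ) + i) = ((l2 + i : ℝ) : ℂ) := by push_cast; ring
  rw [this, Complex.ofReal_ne_zero]
  positivity

lemma hS_ne (h1 : 0 < l1) (h2 : 0 < l2) (h3 : 0 < l3) {j : ℕ} (hj : j ≤ n) :
    poch ((l1:ℂ)+l2+l3+(n:ℂ)-1) j ≠ 0 := by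
  apply poch_ne_zero
  intro i hi
  have hn1 : 1 ≤ n := by omega
  have : ((l1:ℂ)+l2+l3+(n:ℂ)-1 + i) = ((l1 + l2 + l3 + ((n:ℝ) - 1 + i) : ℝ) : ℂ) := by
    push_cast; ring
  rw [this, Complex.ofReal_ne_zero]
  have hge : (0:ℝ) ≤ (n:ℝ) - 1 + i := by
    have : (1:ℝ) ≤ (n:ℝ) := by exact_mod_cast hn1
    have : (0:ℝ) ≤ (i:ℝ) := by positivity
    linarith
  positivity

lemma hc_ne (h3 : 0 < l3) {j : ℕ} (hj : j ≤ n) : poch (-(l3:ℂ)-(n:ℂ)+1) j ≠ 0 := by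
  apply poch_ne_zero
  intro i hi
  have hin : i + 1 ≤ n := by omega
  have : (-(l3:ℂ)-(n:ℂ)+1 + i) = ((-(l3 + ((n:ℝ) - 1 - i)) : ℝ) : ℂ) := by push_cast; ring
  rw [this, Complex.ofReal_ne_zero]
  have hge : (0:ℝ) ≤ (n:ℝ) - 1 - i := by
    have h5 : ((i:ℝ) + 1) ≤ (n:ℝ) := by exact_mod_cast hin
    linarith
  have : 0 < l3 + ((n:ℝ) - 1 - i) := by linarith
  intro hcon
  rw [neg_eq_zero] at hcon
  linarith

lemma hN_ne {j : ℕ} (hj : j ≤ n) : poch (-(n:ℂ)) j ≠ 0 := by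
  apply poch_ne_zero
  intro i hi
  have hin : i + 1 ≤ n := by omega
  have : (-(n:ℂ) + i) = ((-(((n:ℝ) - i)) : ℝ) : ℂ) := by push_cast; ring
  rw [this, Complex.ofReal_ne_zero]
  have h5 : ((i:ℝ) + 1) ≤ (n:ℝ) := by exact_mod_cast hin
  intro hcon
  rw [neg_eq_zero] at hcon
  linarith
end main

lemma helper1 (A R s q f : ℂ) (hq : q ≠ 0) (hf : f ≠ 0) :
    A / (q*f) * R * (s*q*f) = A * s * R := by
  field_simp

lemma helper2 (a b cc d q1 f1 q2 f2 s1 s2 C : ℂ) (hq1 : q1 ≠ 0) (hf1 : f1 ≠ 0)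
    (hq2 : q2 ≠ 0) (hf2 : f2 ≠ 0) :
    a * b / (q1*f1) * (cc * d / (q2*f2)) * (q1*s1 * (q2*s2) * (C*f1*f2))
      = C * a * b * cc * d * s1 * s2 := by
  field_simp

lemma perk (l1 l2 l3 : ℝ) (h1 : 0 < l1) (h2 : 0 < l2) (h3 : 0 < l3)
    (n p : ℕ) (hp : p ≤ n) (k : ℕ) (hk : k ≤ n) :
    poch (-(n : ℂ)) k * poch (l2 : ℂ) k / (poch (-(l3 : ℂ) - n + 1) k * (k.factorial : ℂ)) *
        Racah (l1 : ℂ) (l2 : ℂ) (l3 : ℂ) n p k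
      = ∑ j ∈ range (k+1),
          (poch (-(p:ℂ)) j * poch ((l1:ℂ)+n-p) j
              / (poch ((l1:ℂ)+l2+l3+(n:ℂ)-1) j * (j.factorial : ℂ)))
            * (poch ((p:ℂ)-n) (k-j) * poch ((p:ℂ)+l2) (k-j)
              / (poch (-(l3:ℂ)-(n:ℂ)+1) (k-j) * ((k-j).factorial : ℂ))) := by
  set S : ℂ := (l1:ℂ)+l2+l3+(n:ℂ)-1 with hS
  set c : ℂ := -(l3:ℂ)-(n:ℂ)+1 with hc
  have hD : poch S k * poch c k * (k.factorial : ℂ) ≠ 0 :=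
    mul_ne_zero (mul_ne_zero (hS_ne l1 l2 l3 n h1 h2 h3 hk) (hc_ne l3 n h3 hk))
      (Nat.cast_ne_zero.2 k.factorial_ne_zero)
  apply mul_right_cancel₀ hD
  have W := whipple k (-(p:ℂ)) ((p:ℂ)+l2+l3-1) (l2:ℂ) (-(n:ℂ)) S
  rw [show (l2:ℂ) + -(n:ℂ) + S - -(p:ℂ) - ((p:ℂ)+l2+l3-1) + (k:ℂ) - 1
      = (k:ℂ)+l1+l2-1 by rw [hS]; ring] at W
  rw [show S - ((p:ℂ)+l2+l3-1) = (l1:ℂ)+n-p by rw [hS]; ring] at W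
  rw [show -(n:ℂ) - -(p:ℂ) = (p:ℂ)-n by ring] at W
  rw [show (l2:ℂ) - -(p:ℂ) = (p:ℂ)+l2 by ring] at W
  have claim1 :
      poch (-(n : ℂ)) k * poch (l2 : ℂ) k / (poch c k * (k.factorial : ℂ)) *
          Racah (l1 : ℂ) (l2 : ℂ) (l3 : ℂ) n p k * (poch S k * poch c k * (k.factorial : ℂ))
        = ∑ j ∈ range (k+1), (-1)^j * (k.choose j : ℂ) * poch (-(p:ℂ)) j
            * poch ((p:ℂ)+l2+l3-1) j * poch ((k:ℂ)+l1+l2-1) j * poch ((l2:ℂ)+j) (k-j)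
            * poch (-(n:ℂ)+j) (k-j) * poch (S+j) (k-j) := by
    have hstep : poch (-(n : ℂ)) k * poch (l2 : ℂ) k / (poch c k * (k.factorial : ℂ)) *
          Racah (l1 : ℂ) (l2 : ℂ) (l3 : ℂ) n p k * (poch S k * poch c k * (k.factorial : ℂ))
        = poch (-(n : ℂ)) k * poch (l2 : ℂ) k * poch S k
            * Racah (l1 : ℂ) (l2 : ℂ) (l3 : ℂ) n p k :=
      helper1 _ _ _ _ _ (hc_ne l3 n h3 hk) (Nat.cast_ne_zero.2 k.factorial_ne_zero)
    rw [hstep]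
    rw [Racah]
    have hsub : Finset.range (min p k + 1) ⊆ Finset.range (k+1) :=
      Finset.range_subset_range.2 (by omega)
    rw [← Finset.sum_subset hsub (by
      intro j hj1 hj2
      simp only [Finset.mem_range] at hj1 hj2
      have hpj : p < j := by omega
      rw [poch_neg_nat_zero hpj]
      simp)]
    rw [Finset.mul_sum]
    apply Finset.sum_congr rfl
    intro j hj
    simp only [Finset.mem_range] at hj
    have hjk : j ≤ k := by omega
    have hjn : j ≤ n := by omega
    have hL2 : poch (l2:ℂ) k = poch (l2:ℂ) j * poch ((l2:ℂ)+j) (k-j) := by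
      conv_lhs => rw [show k = j + (k-j) by omega, poch_add]
    have hNN : poch (-(n:ℂ)) k = poch (-(n:ℂ)) j * poch (-(n:ℂ)+j) (k-j) := by
      conv_lhs => rw [show k = j + (k-j) by omega, poch_add]
    have hSS : poch S k = poch S j * poch (S+j) (k-j) := by
      conv_lhs => rw [show k = j + (k-j) by omega, poch_add]
    have hNK : poch (-(k:ℂ)) j = (-1)^j * (k.choose j) * (j.factorial) := poch_neg_nat hjk
    rw [hL2, hNN, hSS, hNK]
    have hfj : ((j.factorial : ℂ)) ≠ 0 := Nat.cast_ne_zero.2 j.factorial_ne_zero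
    field_simp [hl2_ne l2 h2 j, hS_ne l1 l2 l3 n h1 h2 h3 hjn, hN_ne n hjn]
    ring
  have claim2 :
      (∑ j ∈ range (k+1),
          (poch (-(p:ℂ)) j * poch ((l1:ℂ)+n-p) j / (poch S j * (j.factorial : ℂ)))
            * (poch ((p:ℂ)-n) (k-j) * poch ((p:ℂ)+l2) (k-j)
              / (poch c (k-j) * ((k-j).factorial : ℂ))))
          * (poch S k * poch c k * (k.factorial : ℂ))
        = ∑ j ∈ range (k+1), (k.choose j :ℂ) * poch (-(p:ℂ)) j * poch ((l1:ℂ)+n-p) j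
            * poch ((p:ℂ)-n) (k-j) * poch ((p:ℂ)+l2) (k-j) * poch (S+j) (k-j)
            * poch ((l2:ℂ) + -(n:ℂ) - -(p:ℂ) - ((p:ℂ)+l2+l3-1) + (k:ℂ) - j) j := by
    rw [Finset.sum_mul]
    apply Finset.sum_congr rfl
    intro j hj
    simp only [Finset.mem_range] at hj
    have hjk : j ≤ k := by omega
    have hjn : j ≤ n := by omega
    have hkjn : k - j ≤ n := by omega
    have hSS : poch S k = poch S j * poch (S+j) (k-j) := by
      conv_lhs => rw [show k = j + (k-j) by omega, poch_add]
    have hCC : poch c k = poch c (k-j) * poch (c+((k:ℂ)-j)) j := by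
      conv_lhs => rw [show k = (k-j) + j by omega, poch_add]
      congr 2
      push_cast [Nat.cast_sub hjk]
      ring
    have harg : poch ((l2:ℂ) + -(n:ℂ) - -(p:ℂ) - ((p:ℂ)+l2+l3-1) + (k:ℂ) - j) j
        = poch (c+((k:ℂ)-j)) j := by
      congr 1
      rw [hc]
      ring
    have hfac : ((k.choose j : ℂ)) * (j.factorial : ℂ) * ((k-j).factorial : ℂ)
        = (k.factorial : ℂ) := by
      exact_mod_cast congrArg (fun z : ℕ => (z:ℂ)) (Nat.choose_mul_factorial_mul_factorial hjk)
    rw [hSS, hCC, harg, show (k.factorial:ℂ)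
      = (k.choose j : ℂ) * (j.factorial : ℂ) * ((k-j).factorial : ℂ) from hfac.symm]
    have hfj : ((j.factorial : ℂ)) ≠ 0 := Nat.cast_ne_zero.2 j.factorial_ne_zero
    have hfkj : (((k-j).factorial : ℂ)) ≠ 0 := Nat.cast_ne_zero.2 (k-j).factorial_ne_zero
    linear_combination helper2 (poch (-(p:ℂ)) j) (poch ((l1:ℂ)+n-p) j)
      (poch ((p:ℂ)-n) (k-j)) (poch ((p:ℂ)+l2) (k-j)) (poch S j) ((j.factorial : ℂ))
      (poch c (k-j)) (((k-j).factorial : ℂ)) (poch (S+(j:ℂ)) (k-j)) (poch (c+((k:ℂ)-j)) j)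
      ((k.choose j : ℂ)) (hS_ne l1 l2 l3 n h1 h2 h3 hjn) hfj (hc_ne l3 n h3 hkjn) hfkj
  rw [claim1, claim2]
  exact W

noncomputable def AA (l1 l2 l3 : ℝ) (n p : ℕ) (j : ℕ) : ℂ :=
  poch (-(p:ℂ)) j * poch ((l1:ℂ)+n-p) j
    / (poch ((l1:ℂ)+l2+l3+(n:ℂ)-1) j * (j.factorial:ℂ))

noncomputable def BB (l1 l2 l3 : ℝ) (n p : ℕ) (i : ℕ) : ℂ :=
  poch ((p:ℂ)-n) i * poch ((p:ℂ)+l2) i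
    / (poch (-(l3:ℂ)-(n:ℂ)+1) i * (i.factorial:ℂ))

/-- The second generating function for Racah polynomials. -/
theorem racah_generating_function (l1 l2 l3 : ℝ) (h1 : 0 < l1) (h2 : 0 < l2) (h3 : 0 < l3)
    (n p : ℕ) (hp : p ≤ n) (t : ℂ) :
    ∑ k ∈ Finset.range (n + 1),
        poch (-(n : ℂ)) k * poch (l2 : ℂ) k / (poch (-(l3 : ℂ) - n + 1) k * (k.factorial : ℂ)) *
          Racah (l1 : ℂ) (l2 : ℂ) (l3 : ℂ) n p k * t ^ k
      = F21 p ((l1 : ℂ) + n - p) ((l1 : ℂ) + l2 + l3 + n - 1) t *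
          F21 (n - p) ((p : ℂ) + l2) (-(l3 : ℂ) - n + 1) t := by

  have hBcast : ∀ i : ℕ, poch (-((n-p:ℕ):ℂ)) i = poch ((p:ℂ)-n) i := by
    intro i
    congr 1
    push_cast [Nat.cast_sub hp]
    ring
  have hAzero : ∀ j : ℕ, p < j → AA l1 l2 l3 n p j = 0 := by
    intro j hj
    rw [AA, poch_neg_nat_zero hj]
    simp
  have hBzero : ∀ i : ℕ, n - p < i → BB l1 l2 l3 n p i = 0 := by
    intro i hi
    rw [BB, ← hBcast i, poch_neg_nat_zero hi]
    simp
  have hF : F21 p ((l1 : ℂ) + n - p) ((l1 : ℂ) + l2 + l3 + n - 1) t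
      = ∑ j ∈ range (n+1), AA l1 l2 l3 n p j * t^j := by
    rw [F21]
    apply Finset.sum_subset (Finset.range_subset_range.2 (by omega))
    intro j _ hj2
    simp only [Finset.mem_range] at hj2
    rw [show (poch (-(p : ℂ)) j * poch ((l1:ℂ)+n-p) j
        / (poch ((l1:ℂ)+l2+l3+(n:ℂ)-1) j * (j.factorial : ℂ)) * t ^ j)
      = AA l1 l2 l3 n p j * t^j from rfl]
    rw [hAzero j (by omega)]
    simp
  have hG : F21 (n-p) ((p : ℂ) + l2) (-(l3 : ℂ) - n + 1) t
      = ∑ i ∈ range (n+1), BB l1 l2 l3 n p i * t^i := by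
    rw [F21]
    have e : ∀ i ∈ range ((n-p)+1),
        poch (-((n-p:ℕ):ℂ)) i * poch ((p:ℂ)+l2) i
            / (poch (-(l3:ℂ)-(n:ℂ)+1) i * (i.factorial : ℂ)) * t ^ i
        = BB l1 l2 l3 n p i * t^i := by
      intro i _
      rw [BB, hBcast i]
    rw [Finset.sum_congr rfl e]
    apply Finset.sum_subset (Finset.range_subset_range.2 (by omega))
    intro i _ hi2
    simp only [Finset.mem_range] at hi2
    rw [hBzero i (by omega)]
    simp
  rw [hF, hG, Finset.sum_mul_sum]
  have trunc : ∀ j ∈ range (n+1),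
      ∑ i ∈ range (n+1), (AA l1 l2 l3 n p j * t^j) * (BB l1 l2 l3 n p i * t^i)
      = ∑ i ∈ range (n-j+1), (AA l1 l2 l3 n p j * t^j) * (BB l1 l2 l3 n p i * t^i) := by
    intro j hj
    simp only [Finset.mem_range] at hj
    refine (Finset.sum_subset (Finset.range_subset_range.2 (by omega)) ?_).symm
    intro i hi1 hi2
    simp only [Finset.mem_range] at hi1 hi2
    by_cases hjp : j ≤ p
    · rw [hBzero i (by omega)]
      ring
    · rw [hAzero j (by omega)]
      ring
  rw [Finset.sum_congr rfl trunc]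
  rw [show (∑ j ∈ range (n+1), ∑ i ∈ range (n-j+1),
        (AA l1 l2 l3 n p j * t^j) * (BB l1 l2 l3 n p i * t^i))
      = ∑ j ∈ range (n+1), ∑ i ∈ range (n-j+1),
        (fun k j' => AA l1 l2 l3 n p j' * BB l1 l2 l3 n p (k-j') * t^k) (j+i) j from ?_]
  · rw [← sum_tri n (fun k j' => AA l1 l2 l3 n p j' * BB l1 l2 l3 n p (k-j') * t^k)]
    apply Finset.sum_congr rfl
    intro k hk
    simp only [Finset.mem_range] at hk
    rw [perk l1 l2 l3 h1 h2 h3 n p hp k (by omega), Finset.sum_mul]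
    apply Finset.sum_congr rfl
    intro i _
    rw [AA, BB]
  · apply Finset.sum_congr rfl
    intro j _
    apply Finset.sum_congr rfl
    intro i _
    simp only
    rw [show (j+i) - j = i by omega, pow_add]
    ring
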